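/- Let a, c, e be real with a² = c² + e² and a ≠ 0, and let |ψ⟩ = a|000⟩ + c|101⟩ + e|111⟩. Then the local unitary X ⊗ M ⊗ X, where X = [[0,1],[1,0]] and M = (1/a)[[c, e],[e, -c]], satisfies (X ⊗ M ⊗ X)|ψ⟩ = |ψ⟩ and (X ⊗ M ⊗ X)² = I. -/
import Mathlib


open Matrix

/-- The state `a|000⟩ + c|101⟩ + e|111⟩`. -/
def aceState (a c e : ℝ) : Fin 2 × Fin 2 × Fin 2 → ℂ := fun p =>
  if p = (0, 0, 0) then (a : ℂ) else if p = (1, 0, 1) then (c : ℂ)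
  else if p = (1, 1, 1) then (e : ℂ) else 0

/-- if `a² = c² + e²` and `a ≠ 0`, then with `X` the Pauli matrix
and `M = (1/a)[[c,e],[e,-c]]`, the local unitary `X ⊗ M ⊗ X` stabilizes
`a|000⟩ + c|101⟩ + e|111⟩` and squares to the identity. -/
theorem stmt17 (a c e : ℝ) (hsum : a ^ 2 = c ^ 2 + e ^ 2) (ha : a ≠ 0) :
    (Matrix.kroneckerMap (· * ·) (!![0, 1; 1, 0] : Matrix (Fin 2) (Fin 2) ℂ)
        (Matrix.kroneckerMap (· * ·)
          (((a : ℂ))⁻¹ • !![(c : ℂ), (e : ℂ); (e : ℂ), -(c : ℂ)])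
          (!![0, 1; 1, 0] : Matrix (Fin 2) (Fin 2) ℂ))).mulVec (aceState a c e) =
      aceState a c e ∧
    (Matrix.kroneckerMap (· * ·) (!![0, 1; 1, 0] : Matrix (Fin 2) (Fin 2) ℂ)
        (Matrix.kroneckerMap (· * ·)
          (((a : ℂ))⁻¹ • !![(c : ℂ), (e : ℂ); (e : ℂ), -(c : ℂ)])
          (!![0, 1; 1, 0] : Matrix (Fin 2) (Fin 2) ℂ))) *
      (Matrix.kroneckerMap (· * ·) (!![0, 1; 1, 0] : Matrix (Fin 2) (Fin 2) ℂ)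
        (Matrix.kroneckerMap (· * ·)
          (((a : ℂ))⁻¹ • !![(c : ℂ), (e : ℂ); (e : ℂ), -(c : ℂ)])
          (!![0, 1; 1, 0] : Matrix (Fin 2) (Fin 2) ℂ))) = 1 := by
  have ha' : (a : ℂ) ≠ 0 := by exact_mod_cast ha
  have hsum' : (a : ℂ) ^ 2 = (c : ℂ) ^ 2 + (e : ℂ) ^ 2 := by exact_mod_cast hsum
  have hX : (!![0, 1; 1, 0] : Matrix (Fin 2) (Fin 2) ℂ) * !![0, 1; 1, 0] = 1 := by
    norm_num [Matrix.mul_fin_two, ← Matrix.one_fin_two]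
  have hM : (((a : ℂ))⁻¹ • !![(c : ℂ), (e : ℂ); (e : ℂ), -(c : ℂ)]) *
      (((a : ℂ))⁻¹ • !![(c : ℂ), (e : ℂ); (e : ℂ), -(c : ℂ)]) = 1 := by
    rw [Matrix.smul_mul, Matrix.mul_smul, smul_smul, Matrix.mul_fin_two,
      show ((c:ℂ) * c + e * e) = (a:ℂ)^2 by linear_combination -hsum',
      show ((c:ℂ) * e + e * -c) = (0:ℂ) by ring,
      show ((e:ℂ) * c + -c * e) = (0:ℂ) by ring,
      show ((e:ℂ) * e + -c * -c) = (a:ℂ)^2 by linear_combination -hsum']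
    ext i j
    fin_cases i <;> fin_cases j <;>
      simp [Matrix.one_apply] <;> field_simp <;> ring
  constructor
  · funext p
    obtain ⟨i, j, k⟩ := p
    fin_cases i <;> fin_cases j <;> fin_cases k <;>
      simp [mulVec, dotProduct, Fintype.sum_prod_type, Fin.sum_univ_two,
        aceState, Prod.ext_iff, kroneckerMap_apply] <;>
      field_simp <;>
      first
        | linear_combination hsum'
        | linear_combination -hsum'
        | linear_combination 2 * hsum'
        | linear_combination -2 * hsum'
        | ring
  · rw [← Matrix.mul_kronecker_mul, ← Matrix.mul_kronecker_mul, hX, hM,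
      Matrix.one_kronecker_one, Matrix.one_kronecker_one]
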